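/- Let T₀, T₁, y₀, y₁ be nonzero complex polynomials and let f₀, f₁ be nonzero monic complex polynomials such that f₁² divides T₀·f₀² and f₀² divides T₁·f₁²; set T₀° = T₀·f₀²/f₁² and T₁° = T₁·f₁²/f₀². Then: (1) if (y₀,y₁) is super-fertile with respect to (T₀,T₁), then (f₀·y₀, f₁·y₁) is super-fertile with respect to (T₀°,T₁°); (2) assuming (y₀,y₁) is fertile with respect to (T₀,T₁), a pair is obtained from (f₀·y₀, f₁·y₁) by a reproduction in direction i with respect to (T₀°,T₁°) if and only if it equals (f₀·y₀^{[i]}, f₁·y₁^{[i]}) where (y₀^{[i]},y₁^{[i]}) is obtained from (y₀,y₁) by a reproduction in direction i with respect to (T₀,T₁). -/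
import Mathlib


open Polynomial

noncomputable section

/-- The Wronskian of two polynomials: `Wr(f,g) = f·g′ − f′·g`. -/
def pWr (f g : ℂ[X]) : ℂ[X] := f * derivative g - derivative f * g

/-- A pair `y = (y₀,y₁)` of nonzero polynomials is fertile with respect to a pair
`T = (T₀,T₁)` if there exist `ỹ₀, ỹ₁` with `Wr(y₀,ỹ₀) = T₀·y₁²` and `Wr(y₁,ỹ₁) = T₁·y₀²`. -/
def Fertile (T y : ℂ[X] × ℂ[X]) : Prop :=
  y.1 ≠ 0 ∧ y.2 ≠ 0 ∧
  ∃ ty0 ty1 : ℂ[X], pWr y.1 ty0 = T.1 * y.2 ^ 2 ∧ pWr y.2 ty1 = T.2 * y.1 ^ 2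

/-- Reproduction in direction 0: replace `(y₀,y₁)` by `(ỹ₀,y₁)` with `Wr(y₀,ỹ₀) = T₀·y₁²`. -/
def Reprod0 (T y z : ℂ[X] × ℂ[X]) : Prop :=
  z.2 = y.2 ∧ pWr y.1 z.1 = T.1 * y.2 ^ 2

/-- Reproduction in direction 1: replace `(y₀,y₁)` by `(y₀,ỹ₁)` with `Wr(y₁,ỹ₁) = T₁·y₀²`. -/
def Reprod1 (T y z : ℂ[X] × ℂ[X]) : Prop :=
  z.1 = y.1 ∧ pWr y.2 z.2 = T.2 * y.1 ^ 2

/-- Reproduction (in either direction). -/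
def Reprod (T y z : ℂ[X] × ℂ[X]) : Prop := Reprod0 T y z ∨ Reprod1 T y z

/-- A pair is super-fertile w.r.t. `T` if every pair obtained from it by a finite (possibly
empty) sequence of reproductions w.r.t. `T` is fertile w.r.t. `T`. -/
def SuperFertile (T y : ℂ[X] × ℂ[X]) : Prop :=
  ∀ z, Relation.ReflTransGen (Reprod T) y z → Fertile T z

/-- A pair `(y₀,y₁)` is generic w.r.t. `(T₀,T₁)`: `y₀,y₁` squarefree, coprime to each other,
and `yᵢ` coprime with `Tᵢ`. -/
def Generic (T y : ℂ[X] × ℂ[X]) : Prop :=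
  Squarefree y.1 ∧ Squarefree y.2 ∧ IsCoprime y.1 y.2 ∧
    IsCoprime y.1 T.1 ∧ IsCoprime y.2 T.2

/-- A pair represents a critical point w.r.t. `T` if it is generic and fertile w.r.t. `T`. -/
def IsCriticalPt (T y : ℂ[X] × ℂ[X]) : Prop := Generic T y ∧ Fertile T y

/-- A pair lies in a population of critical points corresponding to `T` if it is obtained by a
finite (possibly empty) sequence of reproductions from a pair representing a critical point. -/
def InPopulation (T y : ℂ[X] × ℂ[X]) : Prop :=
  ∃ y₀, IsCriticalPt T y₀ ∧ Relation.ReflTransGen (Reprod T) y₀ y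

lemma pWr_mul (f u v : ℂ[X]) : pWr (f*u) (f*v) = f^2 * pWr u v := by
  simp only [pWr, derivative_mul]; ring

lemma pWr_sub (u a b : ℂ[X]) : pWr u (a - b) = pWr u a - pWr u b := by
  simp only [pWr, derivative_sub]; ring

lemma pWr_add_C_mul (u t : ℂ[X]) (c : ℂ) : pWr u (t + C c * u) = pWr u t := by
  simp only [pWr, derivative_add, derivative_mul, derivative_C]; ring

lemma pWr_zero (u d : ℂ[X]) (hu : u ≠ 0) (h : pWr u d = 0) : ∃ c : ℂ, d = C c * u := by
  by_cases hd : d = 0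
  · exact ⟨0, by simp [hd]⟩
  set g := GCDMonoid.gcd u d with hg
  have hgne : g ≠ 0 := gcd_ne_zero_of_left hu
  have hue : u = g * (u / g) := (EuclideanDomain.mul_div_cancel' hgne (gcd_dvd_left u d)).symm
  have hde : d = g * (d / g) := (EuclideanDomain.mul_div_cancel' hgne (gcd_dvd_right u d)).symm
  have hcop : IsCoprime (u / g) (d / g) := isCoprime_div_gcd_div_gcd hd
  have h0 : pWr (u / g) (d / g) = 0 := by
    have : g ^ 2 * pWr (u / g) (d / g) = 0 := by
      rw [← pWr_mul, ← hue, ← hde, h]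
    exact (mul_eq_zero.mp this).resolve_left (pow_ne_zero 2 hgne)
  have h0' : wronskian (u / g) (d / g) = 0 := h0
  obtain ⟨hdu, hdd⟩ := hcop.wronskian_eq_zero_iff.mp h0'
  obtain ⟨a, ha⟩ : ∃ a : ℂ, u / g = C a := ⟨_, eq_C_of_derivative_eq_zero hdu⟩
  obtain ⟨b, hb⟩ : ∃ b : ℂ, d / g = C b := ⟨_, eq_C_of_derivative_eq_zero hdd⟩
  have hane : a ≠ 0 := by
    intro h0a
    apply hu
    rw [hue, ha, h0a, map_zero, mul_zero]
  refine ⟨b / a, ?_⟩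
  have key : d * C a = C b * u := by
    rw [hue, hde, ha, hb]; ring
  apply mul_left_cancel₀ (show (C a : ℂ[X]) ≠ 0 from fun h' => hane (C_eq_zero.mp h'))
  rw [mul_comm (C a) d, key]
  rw [show C a * (C (b / a) * u) = C (a * (b / a)) * u by rw [C_mul]; ring]
  rw [mul_div_cancel₀ b hane]

lemma reprod_corr (T Tc f g u v : ℂ[X]) (hf : f ≠ 0) (hu : u ≠ 0)
    (hd : T * f ^ 2 = g ^ 2 * Tc) (t : ℂ[X]) (ht : pWr u t = T * v ^ 2) (z : ℂ[X]) :
    pWr (f*u) z = Tc * (g*v)^2 ↔ ∃ w, pWr u w = T * v^2 ∧ z = f * w := by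
  constructor
  · intro h
    have h2 : pWr (f*u) (f*t) = Tc * (g*v)^2 := by
      rw [pWr_mul, ht]
      linear_combination v ^ 2 * hd
    have h3 : pWr (f*u) (z - f*t) = 0 := by rw [pWr_sub, h, h2, sub_self]
    obtain ⟨c, hc⟩ := pWr_zero _ _ (mul_ne_zero hf hu) h3
    refine ⟨t + C c * u, ?_, ?_⟩
    · rw [pWr_add_C_mul, ht]
    · have : z = f * t + C c * (f * u) := by rw [← hc]; ring
      rw [this]; ring
  · rintro ⟨w, hw, rfl⟩
    rw [pWr_mul, hw, show Tc * (g*v)^2 = (g ^ 2 * Tc) * v^2 by ring, ← hd]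
    ring

lemma fertile_scale (T0 T1 T0c T1c f0 f1 : ℂ[X]) (hf0 : f0 ≠ 0) (hf1 : f1 ≠ 0)
    (hd0 : T0 * f0 ^ 2 = f1 ^ 2 * T0c) (hd1 : T1 * f1 ^ 2 = f0 ^ 2 * T1c)
    (w : ℂ[X] × ℂ[X]) (hw : Fertile (T0, T1) w) :
    Fertile (T0c, T1c) (f0 * w.1, f1 * w.2) := by
  obtain ⟨h1, h2, t0, t1, ht0, ht1⟩ := hw
  refine ⟨mul_ne_zero hf0 h1, mul_ne_zero hf1 h2, f0 * t0, f1 * t1, ?_, ?_⟩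
  · show pWr (f0 * w.1) (f0 * t0) = T0c * (f1 * w.2) ^ 2
    rw [pWr_mul, ht0]
    linear_combination w.2 ^ 2 * hd0
  · show pWr (f1 * w.2) (f1 * t1) = T1c * (f0 * w.1) ^ 2
    rw [pWr_mul, ht1]
    linear_combination w.1 ^ 2 * hd1

lemma step_corr (T0 T1 T0c T1c f0 f1 : ℂ[X]) (hf0 : f0 ≠ 0) (hf1 : f1 ≠ 0)
    (hd0 : T0 * f0 ^ 2 = f1 ^ 2 * T0c) (hd1 : T1 * f1 ^ 2 = f0 ^ 2 * T1c)
    (w : ℂ[X] × ℂ[X]) (hw : Fertile (T0, T1) w) (z : ℂ[X] × ℂ[X])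
    (h : Reprod (T0c, T1c) (f0 * w.1, f1 * w.2) z) :
    ∃ w', Reprod (T0, T1) w w' ∧ z = (f0 * w'.1, f1 * w'.2) := by
  obtain ⟨h1, h2, t0, t1, ht0, ht1⟩ := hw
  rcases h with ⟨hz2, hz1⟩ | ⟨hz1, hz2⟩
  · obtain ⟨v, hv, hzv⟩ := (reprod_corr T0 T0c f0 f1 w.1 w.2 hf0 h1 hd0 t0 ht0 z.1).mp hz1
    exact ⟨(v, w.2), Or.inl ⟨rfl, hv⟩, Prod.ext hzv hz2⟩
  · obtain ⟨v, hv, hzv⟩ := (reprod_corr T1 T1c f1 f0 w.2 w.1 hf1 h2 hd1 t1 ht1 z.2).mp hz2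
    exact ⟨(w.1, v), Or.inr ⟨rfl, hv⟩, Prod.ext hz1 hzv⟩

/-- (1) Multiplying a super-fertile pair by monic `f₀, f₁` (with the divisibility conditions)
yields a super-fertile pair w.r.t. the modified `(T₀°,T₁°)`; (2) for a fertile pair,
reproductions of `(f₀·y₀, f₁·y₁)` w.r.t. `(T₀°,T₁°)` in direction `i` correspond exactly to
reproductions of `(y₀,y₁)` w.r.t. `(T₀,T₁)` in direction `i`. -/
theorem superfertile_mul_and_reproduction (T0 T1 y0 y1 f0 f1 T0c T1c : ℂ[X])
    (hT0 : T0 ≠ 0) (hT1 : T1 ≠ 0) (hy0 : y0 ≠ 0) (hy1 : y1 ≠ 0)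
    (hf0 : f0.Monic) (hf1 : f1.Monic)
    (hd0 : T0 * f0 ^ 2 = f1 ^ 2 * T0c) (hd1 : T1 * f1 ^ 2 = f0 ^ 2 * T1c) :
    (SuperFertile (T0, T1) (y0, y1) → SuperFertile (T0c, T1c) (f0 * y0, f1 * y1)) ∧
    (Fertile (T0, T1) (y0, y1) →
      (∀ z : ℂ[X] × ℂ[X],
        Reprod0 (T0c, T1c) (f0 * y0, f1 * y1) z ↔
          ∃ w : ℂ[X] × ℂ[X], Reprod0 (T0, T1) (y0, y1) w ∧ z = (f0 * w.1, f1 * w.2)) ∧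
      (∀ z : ℂ[X] × ℂ[X],
        Reprod1 (T0c, T1c) (f0 * y0, f1 * y1) z ↔
          ∃ w : ℂ[X] × ℂ[X], Reprod1 (T0, T1) (y0, y1) w ∧ z = (f0 * w.1, f1 * w.2))) := by

  have hf0' : f0 ≠ 0 := hf0.ne_zero
  have hf1' : f1 ≠ 0 := hf1.ne_zero
  constructor
  · intro hSF z hz
    have key : ∃ w : ℂ[X] × ℂ[X], Relation.ReflTransGen (Reprod (T0, T1)) (y0, y1) w ∧
        z = (f0 * w.1, f1 * w.2) := by
      induction hz with
      | refl => exact ⟨(y0, y1), Relation.ReflTransGen.refl, rfl⟩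
      | tail _ hstep ih =>
        obtain ⟨w, hw, rfl⟩ := ih
        obtain ⟨w', hw', rfl⟩ := step_corr T0 T1 T0c T1c f0 f1 hf0' hf1' hd0 hd1 w
          (hSF w hw) _ hstep
        exact ⟨w', hw.tail hw', rfl⟩
    obtain ⟨w, hw, rfl⟩ := key
    exact fertile_scale T0 T1 T0c T1c f0 f1 hf0' hf1' hd0 hd1 w (hSF w hw)
  · intro hF
    obtain ⟨h1, h2, t0, t1, ht0, ht1⟩ := hF
    constructor
    · intro z
      constructor
      · rintro ⟨hz2, hz1⟩
        obtain ⟨v, hv, hzv⟩ := (reprod_corr T0 T0c f0 f1 y0 y1 hf0' h1 hd0 t0 ht0 z.1).mp hz1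
        exact ⟨(v, y1), ⟨rfl, hv⟩, Prod.ext hzv hz2⟩
      · rintro ⟨w, ⟨hw2, hw1⟩, rfl⟩
        refine ⟨by simp [hw2], ?_⟩
        show pWr (f0 * y0) (f0 * w.1) = T0c * (f1 * y1) ^ 2
        rw [pWr_mul, hw1]
        linear_combination y1 ^ 2 * hd0
    · intro z
      constructor
      · rintro ⟨hz1, hz2⟩
        obtain ⟨v, hv, hzv⟩ := (reprod_corr T1 T1c f1 f0 y1 y0 hf1' h2 hd1 t1 ht1 z.2).mp hz2
        exact ⟨(y0, v), ⟨rfl, hv⟩, Prod.ext hz1 hzv⟩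
      · rintro ⟨w, ⟨hw1, hw2⟩, rfl⟩
        refine ⟨by simp [hw1], ?_⟩
        show pWr (f1 * y1) (f1 * w.2) = T1c * (f0 * y0) ^ 2
        rw [pWr_mul, hw2]
        linear_combination y0 ^ 2 * hd1
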